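/- Let G = (V,E) be a finite connected multigraph and (T,γ) a rooted carving decomposition of G of width at most w (so for each node u of T, the number of edges of G with exactly one endpoint in V(u) = γ(leaves(T[u])) is at most w). Let r and s be nodes of T with s a descendant of r, and let W = V(r) \ V(s). Then the subgraph of G induced by W has at most 2w connected components. -/

import Mathlib

/-- A rooted binary tree with leaves labeled by elements of `V`
(used as a carving decomposition of a multigraph with vertex set `V`). -/
inductive CTree (V : Type) : Type
  | leaf : V → CTree V
  | node : CTree V → CTree V → CTree V

/-- The list of leaf labels of a labeled binary tree. -/
def CTree.verts {V : Type} : CTree V → List V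
  | .leaf v => [v]
  | .node l r => l.verts ++ r.verts

/-- The subtree at a position given by a path of left/right (`false`/`true`) moves. -/
def CTree.subtreeAt {V : Type} : CTree V → List Bool → Option (CTree V)
  | t, [] => some t
  | .leaf _, _ :: _ => none
  | .node l r, b :: p => (if b then r else l).subtreeAt p

lemma CTree.verts_ne_nil {V : Type} (t : CTree V) : t.verts ≠ [] := by
  induction t with
  | leaf v => simp [CTree.verts]
  | node l r ihl ihr => simp [CTree.verts, List.append_eq_nil_iff]; intro h; exact absurd h ihl

lemma CTree.subtreeAt_append {V : Type} (p q : List Bool) (t : CTree V) :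
    t.subtreeAt (p ++ q) = (t.subtreeAt p).bind (fun t' => t'.subtreeAt q) := by
  induction p generalizing t with
  | nil => simp [CTree.subtreeAt]
  | cons b p ih =>
    cases t with
    | leaf v => simp [CTree.subtreeAt]
    | node l r =>
      cases b <;> simp [CTree.subtreeAt, ih]

lemma CTree.verts_subset_of_subtreeAt {V : Type} (p : List Bool) (t t' : CTree V)
    (h : t.subtreeAt p = some t') : ∀ v, v ∈ t'.verts → v ∈ t.verts := by
  induction p generalizing t with
  | nil => simp [CTree.subtreeAt] at h; subst h; exact fun v hv => hv
  | cons b p ih =>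
    cases t with
    | leaf v => simp [CTree.subtreeAt] at h
    | node l r =>
      cases b <;> simp only [CTree.subtreeAt, if_true, if_false, Bool.false_eq_true] at h <;>
        intro v hv <;> simp [CTree.verts]
      · exact Or.inl (ih l h v hv)
      · exact Or.inr (ih r h v hv)

/-- Let `G` be a finite connected loopless multigraph (edges `E` with endpoint map `ε`)
and `(T,γ)` a rooted carving decomposition of `G` of width at most `w`. If `s` is a
descendant of `r` in `T` and `W = V(r) \ V(s)`, then the subgraph of `G` induced by `W`
has at most `2w` connected components. -/
theorem induced_components_le (V E : Type) [Fintype V] [DecidableEq V] [Fintype E]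
    (ε : E → V × V)
    (hloopless : ∀ e, (ε e).1 ≠ (ε e).2)
    (hconn : ∀ v w : V, Relation.ReflTransGen (fun a b => ∃ e, ε e = (a, b) ∨ ε e = (b, a)) v w)
    (T : CTree V) (hnodup : T.verts.Nodup) (hsurj : ∀ v : V, v ∈ T.verts)
    (w : ℕ)
    (hwidth : ∀ p t, T.subtreeAt p = some t →
      (Finset.univ.filter (fun e : E =>
        ((ε e).1 ∈ t.verts ∧ (ε e).2 ∉ t.verts) ∨
        ((ε e).2 ∈ t.verts ∧ (ε e).1 ∉ t.verts))).card ≤ w)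
    (pr ps : List Bool) (tr ts : CTree V)
    (hr : T.subtreeAt pr = some tr) (hs : T.subtreeAt ps = some ts)
    (hdesc : pr <+: ps) :
    Nat.card (SimpleGraph.fromRel
      (fun (x y : {v : V // v ∈ tr.verts ∧ v ∉ ts.verts}) =>
        ∃ e, ε e = (x.1, y.1))).ConnectedComponent ≤ 2 * w := by
  classical
  obtain ⟨q, hq⟩ := hdesc
  subst hq
  have hsub : tr.subtreeAt q = some ts := by
    have h := CTree.subtreeAt_append pr q T
    rw [hs, hr] at h
    simpa using h.symm
  have hts_tr : ∀ v, v ∈ ts.verts → v ∈ tr.verts :=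
    CTree.verts_subset_of_subtreeAt q tr ts hsub
  set S := {v : V // v ∈ tr.verts ∧ v ∉ ts.verts} with hS
  set G := SimpleGraph.fromRel (fun (x y : S) => ∃ e, ε e = (x.1, y.1)) with hG
  obtain ⟨v0, hv0⟩ : ∃ v, v ∈ ts.verts := by
    cases h : ts.verts with
    | nil => exact absurd h (CTree.verts_ne_nil ts)
    | cons a l => exact ⟨a, h ▸ List.mem_cons_self (a := a) (l := l)⟩
  -- Key: every vertex of W reaches, within the induced graph, a vertex incident
  -- to an edge leaving W.
  have main : ∀ y, Relation.ReflTransGen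
      (fun a b => ∃ e, ε e = (a, b) ∨ ε e = (b, a)) y v0 →
      ∀ hy : y ∈ tr.verts ∧ y ∉ ts.verts, ∃ (e : E) (a : S) (b : V),
        (ε e = (a.1, b) ∨ ε e = (b, a.1)) ∧ (b ∉ tr.verts ∨ b ∈ ts.verts) ∧
        G.Reachable ⟨y, hy⟩ a := by
    intro y hrt
    induction hrt using Relation.ReflTransGen.head_induction_on with
    | refl => intro hy; exact absurd hv0 hy.2
    | @head y z hstep _ ih =>
      intro hy
      obtain ⟨e, he⟩ := hstep
      by_cases hz : z ∈ tr.verts ∧ z ∉ ts.verts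
      · obtain ⟨e', a, b, h1, h2, h3⟩ := ih hz
        refine ⟨e', a, b, h1, h2, ?_⟩
        refine (SimpleGraph.Adj.reachable ?_).trans h3
        have hne : y ≠ z := by
          rcases he with he | he
          · have h := hloopless e; rw [he] at h; exact h
          · have h := hloopless e; rw [he] at h; exact fun hyz => h (by simp [hyz])
        rw [hG, SimpleGraph.fromRel_adj]
        refine ⟨fun hc => hne (congrArg Subtype.val hc), ?_⟩
        rcases he with he | he
        · exact Or.inl ⟨e, he⟩
        · exact Or.inr ⟨e, he⟩
      · refine ⟨e, ⟨y, hy⟩, z, he, ?_, SimpleGraph.Reachable.refl _⟩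
        by_cases hz2 : z ∈ tr.verts
        · exact Or.inr (by_contra fun hz3 => hz ⟨hz2, hz3⟩)
        · exact Or.inl hz2
  set ctr := fun e : E =>
    ((ε e).1 ∈ tr.verts ∧ (ε e).2 ∉ tr.verts) ∨
    ((ε e).2 ∈ tr.verts ∧ (ε e).1 ∉ tr.verts) with hctr
  set cts := fun e : E =>
    ((ε e).1 ∈ ts.verts ∧ (ε e).2 ∉ ts.verts) ∨
    ((ε e).2 ∈ ts.verts ∧ (ε e).1 ∉ ts.verts) with hcts
  have exQ : ∀ c : G.ConnectedComponent, ∃ s : {e : E // ctr e} ⊕ {e : E // cts e},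
      Sum.elim
        (fun p : {e : E // ctr e} => ∃ (a : S) (b : V),
          (ε p.1 = (a.1, b) ∨ ε p.1 = (b, a.1)) ∧ b ∉ tr.verts ∧
          G.connectedComponentMk a = c)
        (fun p : {e : E // cts e} => ∃ (a : S) (b : V),
          (ε p.1 = (a.1, b) ∨ ε p.1 = (b, a.1)) ∧ b ∈ ts.verts ∧
          G.connectedComponentMk a = c)
        s := by
    intro c
    obtain ⟨x, hx⟩ := c.exists_rep
    obtain ⟨e, a, b, h1, h2, h3⟩ := main x.1 (hconn x.1 v0) x.2
    have hc : G.connectedComponentMk a = c := by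
      rw [← hx]
      exact (SimpleGraph.ConnectedComponent.sound (by exact_mod_cast h3)).symm
    rcases h2 with h2 | h2
    · refine ⟨.inl ⟨e, ?_⟩, ?_⟩
      · show ((ε e).1 ∈ tr.verts ∧ (ε e).2 ∉ tr.verts) ∨
          ((ε e).2 ∈ tr.verts ∧ (ε e).1 ∉ tr.verts)
        rcases h1 with h1 | h1 <;> rw [h1]
        · exact Or.inl ⟨a.2.1, h2⟩
        · exact Or.inr ⟨a.2.1, h2⟩
      · exact ⟨a, b, h1, h2, hc⟩
    · refine ⟨.inr ⟨e, ?_⟩, ?_⟩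
      · show ((ε e).1 ∈ ts.verts ∧ (ε e).2 ∉ ts.verts) ∨
          ((ε e).2 ∈ ts.verts ∧ (ε e).1 ∉ ts.verts)
        rcases h1 with h1 | h1 <;> rw [h1]
        · exact Or.inr ⟨h2, a.2.2⟩
        · exact Or.inl ⟨h2, a.2.2⟩
      · exact ⟨a, b, h1, h2, hc⟩
  let f : G.ConnectedComponent → ({e : E // ctr e} ⊕ {e : E // cts e}) :=
    fun c => (exQ c).choose
  have hf : ∀ c, Sum.elim
        (fun p : {e : E // ctr e} => ∃ (a : S) (b : V),
          (ε p.1 = (a.1, b) ∨ ε p.1 = (b, a.1)) ∧ b ∉ tr.verts ∧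
          G.connectedComponentMk a = c)
        (fun p : {e : E // cts e} => ∃ (a : S) (b : V),
          (ε p.1 = (a.1, b) ∨ ε p.1 = (b, a.1)) ∧ b ∈ ts.verts ∧
          G.connectedComponentMk a = c)
        (f c) := fun c => (exQ c).choose_spec
  have finj : Function.Injective f := by
    intro c c' hcc
    have h1 := hf c
    have h2 := hf c'
    rw [hcc] at h1
    rcases hsv : f c' with p | p <;> rw [hsv] at h1 h2 <;>
      simp only [Sum.elim_inl, Sum.elim_inr] at h1 h2
    · obtain ⟨a, b, e1, e2, e3⟩ := h1
      obtain ⟨a', b', e1', e2', e3'⟩ := h2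
      have haa : a = a' := by
        rcases e1 with e1 | e1 <;> rcases e1' with e1' | e1' <;>
          rw [e1, Prod.mk.injEq] at e1'
        · exact Subtype.ext e1'.1
        · exact absurd (by rw [e1'.2]; exact a'.2.1 : b ∈ tr.verts) e2
        · exact absurd (by rw [e1'.1]; exact a'.2.1 : b ∈ tr.verts) e2
        · exact Subtype.ext e1'.2
      rw [← e3, ← e3', haa]
    · obtain ⟨a, b, e1, e2, e3⟩ := h1
      obtain ⟨a', b', e1', e2', e3'⟩ := h2
      have haa : a = a' := by
        rcases e1 with e1 | e1 <;> rcases e1' with e1' | e1' <;>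
          rw [e1, Prod.mk.injEq] at e1'
        · exact Subtype.ext e1'.1
        · exact absurd (by rw [← e1'.2]; exact e2 : a'.1 ∈ ts.verts) a'.2.2
        · exact absurd (by rw [e1'.2]; exact e2' : a.1 ∈ ts.verts) a.2.2
        · exact Subtype.ext e1'.2
      rw [← e3, ← e3', haa]
  have hcard := Nat.card_le_card_of_injective f finj
  have c1 : Nat.card {e : E // ctr e} ≤ w := by
    rw [Nat.card_eq_fintype_card, Fintype.card_subtype]
    exact hwidth pr tr hr
  have c2 : Nat.card {e : E // cts e} ≤ w := by
    rw [Nat.card_eq_fintype_card, Fintype.card_subtype]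
    exact hwidth (pr ++ q) ts hs
  calc Nat.card G.ConnectedComponent
      ≤ Nat.card ({e : E // ctr e} ⊕ {e : E // cts e}) := hcard
    _ = Nat.card {e : E // ctr e} + Nat.card {e : E // cts e} := Nat.card_sum
    _ ≤ w + w := add_le_add c1 c2
    _ = 2 * w := (two_mul w).symm
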